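/- For the Davis–Skodje system with γ > 1, the ILDM approximation to the center manifold, defined as the set of points where the vector field f(x) is orthogonal to the orthogonal complement of the eigenvector e^c = ((1+x₁)³, 1 + ((γ+1)/(γ-1))x₁)ᵀ of Df (equivalently, f(x) is parallel to e^c), is given by x₂ = x₁/(1+x₁) + (2x₁²/γ²)·[1/((1 - 1/γ)(1+x₁)³)]. -/

import Mathlib

theorem davis_skodje_ildm (γ x₁ : ℝ) (hγ : 1 < γ) (hx₁ : 0 ≤ x₁) (x₂ : ℝ) :
    ((1 + ((γ + 1) / (γ - 1)) * x₁) * (-x₁)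
        + (-(1 + x₁) ^ 3) * (-γ * x₂ + ((γ - 1) * x₁ + γ * x₁ ^ 2) / (1 + x₁) ^ 2) = 0)
      ↔ x₂ = x₁ / (1 + x₁) + (2 * x₁ ^ 2 / γ ^ 2) * (1 / ((1 - 1 / γ) * (1 + x₁) ^ 3)) := by
  have h1 : (1 + x₁) ≠ 0 := by positivity
  have hγ0 : γ ≠ 0 := by linarith
  have hγ1 : γ - 1 ≠ 0 := by linarith
  have hγ1' : 1 - 1/γ ≠ 0 := by
    have : 1/γ < 1 := by rw [div_lt_one (by linarith)]; linarith
    linarith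
  field_simp
  constructor <;> intro h
  · apply mul_left_cancel₀ h1
    linear_combination (1 + x₁) * h
  · apply mul_left_cancel₀ hγ0
    linear_combination γ * h
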